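/- Let f(z) = |z|^{4/(N−2)} z with 3 ≤ N ≤ 6, and let ∂_z f, ∂_z̄ f denote the Wirtinger derivatives. Then |∂_z f(u) − ∂_z f(v)| ≤ C|u−v|(|u|^{(6−N)/(N−2)} + |v|^{(6−N)/(N−2)}) for all u, v ∈ ℂ, and similarly for ∂_z̄ f. -/

import Mathlib

/-- The Wirtinger derivative `∂_z f = ½(∂_x f − i ∂_y f)`, for `f : ℂ → ℂ` viewed as a
real-differentiable function. -/
noncomputable def wirtingerZ (f : ℂ → ℂ) (u : ℂ) : ℂ :=
  (fderiv ℝ f u 1 - Complex.I * fderiv ℝ f u Complex.I) / 2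

/-- The Wirtinger derivative `∂_z̄ f = ½(∂_x f + i ∂_y f)`. -/
noncomputable def wirtingerZbar (f : ℂ → ℂ) (u : ℂ) : ℂ :=
  (fderiv ℝ f u 1 + Complex.I * fderiv ℝ f u Complex.I) / 2

open Complex

noncomputable def nDeriv (α : ℝ) (x : ℂ) : ℂ →L[ℝ] ℝ :=
  ((α/2) * Complex.normSq x ^ (α/2 - 1)) • ((2*x.re) • Complex.reCLM + (2*x.im) • Complex.imCLM)

lemma hasFDerivAt_normSq (x : ℂ) :
    HasFDerivAt Complex.normSq
      ((2*x.re) • Complex.reCLM + (2*x.im) • Complex.imCLM : ℂ →L[ℝ] ℝ) x := by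
  have h1 : HasFDerivAt (fun z : ℂ => z.re * z.re + z.im * z.im)
      ((2*x.re) • Complex.reCLM + (2*x.im) • Complex.imCLM : ℂ →L[ℝ] ℝ) x := by
    have hre := (Complex.reCLM.hasFDerivAt (x := x))
    have him := (Complex.imCLM.hasFDerivAt (x := x))
    have := (hre.mul hre).add (him.mul him)
    refine this.congr_fderiv ?_
    ext w
    simp [Complex.reCLM, Complex.imCLM]
    ring
  have : Complex.normSq = fun z : ℂ => z.re * z.re + z.im * z.im := by
    funext z; simp [Complex.normSq_apply]
  rw [this]; exact h1

lemma norm_rpow_eq (α : ℝ) (z : ℂ) : ‖z‖ ^ α = Complex.normSq z ^ (α/2) := by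
  rw [Complex.normSq_eq_norm_sq, ← Real.rpow_natCast ‖z‖ 2,
    ← Real.rpow_mul (norm_nonneg z)]
  norm_num
  ring_nf

lemma myNormRpowDeriv (α : ℝ) {x : ℂ} (hx : x ≠ 0) :
    HasFDerivAt (fun z : ℂ => ‖z‖ ^ α) (nDeriv α x) x := by
  have hns : Complex.normSq x ≠ 0 := by simpa [Complex.normSq_eq_zero] using hx
  have h := (Real.hasDerivAt_rpow_const (x := Complex.normSq x) (p := α/2)
    (Or.inl hns)).comp_hasFDerivAt x (hasFDerivAt_normSq x)
  have : (fun z : ℂ => ‖z‖ ^ α) = fun z : ℂ => Complex.normSq z ^ (α/2) := by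
    funext z; exact norm_rpow_eq α z
  rw [this]
  exact h

noncomputable def fDeriv (α : ℝ) (x : ℂ) : ℂ →L[ℝ] ℂ :=
  (‖x‖ ^ α : ℝ) • (ContinuousLinearMap.id ℝ ℂ) + (nDeriv α x).smulRight x

lemma hasFDerivAt_f (α : ℝ) {x : ℂ} (hx : x ≠ 0) :
    HasFDerivAt (fun z : ℂ => ((‖z‖ ^ α : ℝ) : ℂ) * z) (fDeriv α x) x := by
  have h := (myNormRpowDeriv α hx).smul (hasFDerivAt_id x)
  have he : (fun z : ℂ => ((‖z‖ ^ α : ℝ) : ℂ) * z) = fun z : ℂ => (‖z‖ ^ α : ℝ) • z := by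
    funext z; rw [Complex.real_smul]
  rw [he]
  exact h

lemma hasFDerivAt_f_zero (α : ℝ) (hα : 0 < α) :
    HasFDerivAt (fun z : ℂ => ((‖z‖ ^ α : ℝ) : ℂ) * z) (0 : ℂ →L[ℝ] ℂ) 0 := by
  rw [hasFDerivAt_iff_isLittleO_nhds_zero]
  rw [Asymptotics.isLittleO_iff]
  intro c hc
  have h1 : Filter.Tendsto (fun z : ℂ => ‖z‖ ^ α) (nhds 0) (nhds 0) := by
    have h2 : Filter.Tendsto (fun t : ℝ => t ^ α) (nhds 0) (nhds 0) := by
      have := (Real.continuousAt_rpow_const 0 α (Or.inr hα.le)).tendsto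
      simpa [Real.zero_rpow (ne_of_gt hα)] using this
    exact h2.comp tendsto_norm_zero
  filter_upwards [h1.eventually_le_const hc] with z hz
  simp only [zero_add, mul_zero, sub_zero, ContinuousLinearMap.zero_apply, norm_mul]
  rw [Complex.norm_real, Real.norm_eq_abs,
    _root_.abs_of_nonneg (Real.rpow_nonneg (norm_nonneg z) α)]
  exact mul_le_mul_of_nonneg_right hz (norm_nonneg z)

lemma wirtingerZ_formula (α : ℝ) (hα : 0 < α) (x : ℂ) :
    wirtingerZ (fun z => ((‖z‖ ^ α : ℝ) : ℂ) * z) x = (((1 + α/2) * ‖x‖ ^ α : ℝ) : ℂ) := by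
  by_cases hx : x = 0
  · subst hx
    unfold wirtingerZ
    rw [(hasFDerivAt_f_zero α hα).fderiv]
    simp [Real.zero_rpow (ne_of_gt hα)]
  unfold wirtingerZ
  rw [(hasFDerivAt_f α hx).fderiv]
  simp only [fDeriv, nDeriv, ContinuousLinearMap.add_apply, ContinuousLinearMap.smul_apply,
    ContinuousLinearMap.smulRight_apply, ContinuousLinearMap.id_apply,
    Complex.reCLM_apply, Complex.imCLM_apply, Complex.I_re, Complex.I_im, Complex.one_re,
    Complex.one_im, smul_eq_mul, mul_one, mul_zero, add_zero, zero_add, Complex.real_smul]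
  have hns : Complex.normSq x ≠ 0 := by simpa [Complex.normSq_eq_zero] using hx
  have hkey : ‖x‖ ^ α = Complex.normSq x ^ (α/2-1) * Complex.normSq x := by
    rw [norm_rpow_eq α x, show α/2 = (α/2-1)+1 by ring, Real.rpow_add_one hns]; ring_nf
  rw [hkey]
  push_cast
  simp only [Complex.ext_iff, Complex.normSq_apply]
  push_cast
  constructor <;> simp <;> ring

lemma wirtingerZbar_formula (α : ℝ) (hα : 0 < α) (x : ℂ) :
    wirtingerZbar (fun z => ((‖z‖ ^ α : ℝ) : ℂ) * z) x
      = (((α/2) * ‖x‖ ^ (α-2) : ℝ) : ℂ) * x^2 := by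
  by_cases hx : x = 0
  · subst hx
    unfold wirtingerZbar
    rw [(hasFDerivAt_f_zero α hα).fderiv]
    simp
  unfold wirtingerZbar
  rw [(hasFDerivAt_f α hx).fderiv]
  simp only [fDeriv, nDeriv, ContinuousLinearMap.add_apply, ContinuousLinearMap.smul_apply,
    ContinuousLinearMap.smulRight_apply, ContinuousLinearMap.id_apply,
    Complex.reCLM_apply, Complex.imCLM_apply, Complex.I_re, Complex.I_im, Complex.one_re,
    Complex.one_im, smul_eq_mul, mul_one, mul_zero, add_zero, zero_add, Complex.real_smul]
  have hns : Complex.normSq x ≠ 0 := by simpa [Complex.normSq_eq_zero] using hx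
  have h1 : ‖x‖ ^ (α-2) = Complex.normSq x ^ (α/2-1) := by
    rw [norm_rpow_eq (α-2) x]; ring_nf
  have h2 : ‖x‖ ^ α = Complex.normSq x ^ (α/2-1) * Complex.normSq x := by
    rw [norm_rpow_eq α x, show α/2 = (α/2-1)+1 by ring, Real.rpow_add_one hns]; ring_nf
  rw [h1, h2]
  push_cast
  simp only [Complex.ext_iff, Complex.normSq_apply]
  push_cast
  constructor <;> simp [pow_two, Complex.mul_re, Complex.mul_im] <;> ring

lemma cs_ineq (x w : ℂ) : |x.re*w.re + x.im*w.im| ≤ ‖x‖*‖w‖ := by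
  have hx : ‖x‖^2 = x.re^2 + x.im^2 := by
    rw [Complex.sq_norm, Complex.normSq_apply]; ring
  have hw : ‖w‖^2 = w.re^2 + w.im^2 := by
    rw [Complex.sq_norm, Complex.normSq_apply]; ring
  have h1 : (0:ℝ) ≤ ‖x‖ := norm_nonneg x
  have h2 : (0:ℝ) ≤ ‖w‖ := norm_nonneg w
  rw [abs_le]
  constructor <;> nlinarith [sq_nonneg (x.re*w.im - x.im*w.re), sq_nonneg (x.re*w.im + x.im*w.re),
    mul_nonneg h1 h2, sq_nonneg (‖x‖*‖w‖ + (x.re*w.re + x.im*w.im)),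
    sq_nonneg (‖x‖*‖w‖ - (x.re*w.re + x.im*w.im))]

lemma nDeriv_apply (β : ℝ) (x w : ℂ) :
    nDeriv β x w = (β/2 * Complex.normSq x ^ (β/2-1)) * (2*x.re*w.re + 2*x.im*w.im) := by
  simp [nDeriv, ContinuousLinearMap.smul_apply, ContinuousLinearMap.add_apply]
  ring

lemma nDeriv_bound (β : ℝ) {x : ℂ} (hx : x ≠ 0) (w : ℂ) :
    |nDeriv β x w| ≤ |β| * ‖x‖ ^ (β-1) * ‖w‖ := by
  have hn : (0:ℝ) < ‖x‖ := norm_pos_iff.mpr hx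
  have hQ : (0:ℝ) ≤ Complex.normSq x ^ (β/2-1) := Real.rpow_nonneg (Complex.normSq_nonneg x) _
  have hQeq : Complex.normSq x ^ (β/2-1) = ‖x‖ ^ (β-2) := by
    rw [norm_rpow_eq (β-2) x]; ring_nf
  have h1 : ‖x‖ ^ (β-2) * ‖x‖ = ‖x‖ ^ (β-1) := by
    rw [show β-1 = (β-2)+1 by ring, Real.rpow_add_one (ne_of_gt hn)]
  rw [nDeriv_apply]
  have e1 : (β/2 * Complex.normSq x ^ (β/2-1)) * (2*x.re*w.re + 2*x.im*w.im)
      = (β * Complex.normSq x ^ (β/2-1)) * (x.re*w.re + x.im*w.im) := by ring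
  rw [e1, abs_mul, abs_mul]
  rw [_root_.abs_of_nonneg hQ]
  calc |β| * Complex.normSq x ^ (β/2-1) * |x.re*w.re + x.im*w.im|
      ≤ |β| * Complex.normSq x ^ (β/2-1) * (‖x‖*‖w‖) :=
        mul_le_mul_of_nonneg_left (cs_ineq x w) (mul_nonneg (abs_nonneg β) hQ)
    _ = |β| * (‖x‖^(β-2) * ‖x‖) * ‖w‖ := by rw [hQeq]; ring
    _ = |β| * ‖x‖^(β-1) * ‖w‖ := by rw [h1]

lemma key_lip (α K : ℝ) (hα : 1 ≤ α) (hK : 0 ≤ K) (F : ℂ → ℂ) (D : ℂ → ℂ →L[ℝ] ℂ)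
    (hFd : ∀ x : ℂ, x ≠ 0 → HasFDerivAt F (D x) x)
    (hD : ∀ x : ℂ, x ≠ 0 → ‖D x‖ ≤ K * ‖x‖ ^ (α-1))
    (hF : ∀ x : ℂ, ‖F x‖ ≤ K * ‖x‖ ^ α)
    {u v : ℂ} (huv : ‖v‖ ≤ ‖u‖) :
    ‖F u - F v‖ ≤ 2*K * ‖u-v‖ * (‖u‖^(α-1) + ‖v‖^(α-1)) := by
  have hαne : α ≠ 0 := by linarith
  have hpu : (0:ℝ) ≤ ‖u‖^(α-1) := Real.rpow_nonneg (norm_nonneg u) _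
  have hpv : (0:ℝ) ≤ ‖v‖^(α-1) := Real.rpow_nonneg (norm_nonneg v) _
  by_cases hcase : ‖u‖ ≤ 2*‖u-v‖
  · have hu : ‖u‖^α = ‖u‖^(α-1) * ‖u‖ := by
      rw [show α = (α-1)+1 by ring, Real.rpow_add' (norm_nonneg u) (by simpa using hαne),
        Real.rpow_one]; ring_nf
    have hv : ‖v‖^α = ‖v‖^(α-1) * ‖v‖ := by
      rw [show α = (α-1)+1 by ring, Real.rpow_add' (norm_nonneg v) (by simpa using hαne),
        Real.rpow_one]; ring_nf
    calc ‖F u - F v‖ ≤ ‖F u‖ + ‖F v‖ := norm_sub_le _ _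
      _ ≤ K * ‖u‖^α + K * ‖v‖^α := add_le_add (hF u) (hF v)
      _ ≤ 2*K * ‖u-v‖ * (‖u‖^(α-1) + ‖v‖^(α-1)) := by
          rw [hu, hv]
          nlinarith [norm_nonneg (u-v), norm_nonneg v, huv,
            mul_nonneg hK hpu, mul_nonneg hK hpv]
  · push_neg at hcase
    have huvpos : (0:ℝ) ≤ ‖u-v‖ := norm_nonneg _
    have hupos : (0:ℝ) < ‖u‖ := by linarith
    have hmem : ∀ x ∈ segment ℝ v u, ‖x‖ ≤ ‖u‖ ∧ ‖u‖ - ‖u-v‖ ≤ ‖x‖ := by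
      rintro x ⟨a, b, ha, hb, hab, rfl⟩
      constructor
      · calc ‖a • v + b • u‖ ≤ a*‖v‖ + b*‖u‖ := by
              refine (norm_add_le _ _).trans ?_
              rw [norm_smul, norm_smul, Real.norm_eq_abs, Real.norm_eq_abs,
                _root_.abs_of_nonneg ha, _root_.abs_of_nonneg hb]
          _ ≤ ‖u‖ := by nlinarith
      · have hxu : ‖a • v + b • u - u‖ ≤ ‖u - v‖ := by
          have : a • v + b • u - u = a • (v - u) := by
            rw [smul_sub]
            rw [show b = 1 - a by linarith]
            module
          rw [this, norm_smul, Real.norm_eq_abs, _root_.abs_of_nonneg ha, norm_sub_rev]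
          nlinarith [norm_nonneg (u - v)]
        have := norm_sub_norm_le (a • v + b • u) u
        rw [norm_sub_rev u] at hxu ⊢
        have h2 := abs_norm_sub_norm_le (a • v + b • u) u
        have := (abs_le.mp h2).1
        linarith
    have hne : ∀ x ∈ segment ℝ v u, x ≠ 0 := by
      intro x hx h0
      obtain ⟨_, h2⟩ := hmem x hx
      rw [h0, norm_zero] at h2
      linarith
    have hmvt := Convex.norm_image_sub_le_of_norm_hasFDerivWithin_le
      (f := F) (f' := D) (s := segment ℝ v u) (C := K * ‖u‖^(α-1))
      (fun x hx => (hFd x (hne x hx)).hasFDerivWithinAt)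
      (fun x hx => by
        refine (hD x (hne x hx)).trans ?_
        have := (hmem x hx).1
        exact mul_le_mul_of_nonneg_left
          (Real.rpow_le_rpow (norm_nonneg x) this (by linarith)) hK)
      (convex_segment v u) (left_mem_segment ℝ v u) (right_mem_segment ℝ v u)
    calc ‖F u - F v‖ ≤ K * ‖u‖^(α-1) * ‖u - v‖ := hmvt
      _ ≤ 2*K * ‖u-v‖ * (‖u‖^(α-1) + ‖v‖^(α-1)) := by
          nlinarith [mul_nonneg hK hpu, mul_nonneg hK hpv, mul_nonneg hK huvpos]

lemma key_lip' (α K : ℝ) (hα : 1 ≤ α) (hK : 0 ≤ K) (F : ℂ → ℂ) (D : ℂ → ℂ →L[ℝ] ℂ)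
    (hFd : ∀ x : ℂ, x ≠ 0 → HasFDerivAt F (D x) x)
    (hD : ∀ x : ℂ, x ≠ 0 → ‖D x‖ ≤ K * ‖x‖ ^ (α-1))
    (hF : ∀ x : ℂ, ‖F x‖ ≤ K * ‖x‖ ^ α)
    (u v : ℂ) :
    ‖F u - F v‖ ≤ 2*K * ‖u-v‖ * (‖u‖^(α-1) + ‖v‖^(α-1)) := by
  rcases le_total ‖v‖ ‖u‖ with h | h
  · exact key_lip α K hα hK F D hFd hD hF h
  · have := key_lip α K hα hK F D hFd hD hF h
    rw [norm_sub_rev (F v), norm_sub_rev v] at this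
    linarith

noncomputable def D1 (α : ℝ) (x : ℂ) : ℂ →L[ℝ] ℂ :=
  Complex.ofRealCLM.comp ((1+α/2) • nDeriv α x)

lemma hasFDerivAt_F1 (α : ℝ) {x : ℂ} (hx : x ≠ 0) :
    HasFDerivAt (fun z : ℂ => (((1 + α/2) * ‖z‖ ^ α : ℝ) : ℂ)) (D1 α x) x :=
  Complex.ofRealCLM.hasFDerivAt.comp x ((myNormRpowDeriv α hx).const_mul (1+α/2))

lemma D1_bound (α : ℝ) (hα1 : 1 ≤ α) (hα4 : α ≤ 4) {x : ℂ} (hx : x ≠ 0) :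
    ‖D1 α x‖ ≤ 12 * ‖x‖ ^ (α-1) := by
  have hp : (0:ℝ) ≤ ‖x‖^(α-1) := Real.rpow_nonneg (norm_nonneg x) _
  apply ContinuousLinearMap.opNorm_le_bound _ (by positivity)
  intro w
  have : D1 α x w = (((1+α/2) * nDeriv α x w : ℝ) : ℂ) := by
    simp [D1]
  rw [this, Complex.norm_real, Real.norm_eq_abs, abs_mul]
  have h2 := nDeriv_bound α hx w
  have h3 : |1+α/2| ≤ 3 := by rw [_root_.abs_of_nonneg (by linarith)]; linarith
  have h4 : |α| ≤ 4 := by rw [_root_.abs_of_nonneg (by linarith)]; linarith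
  have h5 : (0:ℝ) ≤ |nDeriv α x w| := abs_nonneg _
  have h6 : (0:ℝ) ≤ ‖w‖ := norm_nonneg w
  nlinarith [abs_nonneg (1+α/2), abs_nonneg α, mul_nonneg hp h6]

noncomputable def D2 (α : ℝ) (x : ℂ) : ℂ →L[ℝ] ℂ :=
  ((α/2) * ‖x‖^(α-2) : ℝ) • (x • ContinuousLinearMap.id ℝ ℂ + x • ContinuousLinearMap.id ℝ ℂ)
    + ((α/2) • nDeriv (α-2) x).smulRight (x^2)

lemma hasFDerivAt_F2 (α : ℝ) {x : ℂ} (hx : x ≠ 0) :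
    HasFDerivAt (fun z : ℂ => (((α/2) * ‖z‖ ^ (α-2) : ℝ) : ℂ) * z^2) (D2 α x) x := by
  have hc := (myNormRpowDeriv (α-2) hx).const_mul (α/2)
  have hsq : HasFDerivAt (fun z : ℂ => z^2)
      (x • ContinuousLinearMap.id ℝ ℂ + x • ContinuousLinearMap.id ℝ ℂ) x := by
    have h := (hasFDerivAt_id (𝕜 := ℝ) x).mul (hasFDerivAt_id x)
    have he : (fun z : ℂ => z^2) = fun z : ℂ => z * z := by funext z; ring
    rw [he]
    exact h
  have h := hc.smul hsq
  have he : (fun z : ℂ => (((α/2) * ‖z‖ ^ (α-2) : ℝ) : ℂ) * z^2)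
      = fun z : ℂ => ((α/2) * ‖z‖ ^ (α-2) : ℝ) • z^2 := by
    funext z; rw [Complex.real_smul]
  rw [he]
  exact h

lemma D2_bound (α : ℝ) (hα1 : 1 ≤ α) (hα4 : α ≤ 4) {x : ℂ} (hx : x ≠ 0) :
    ‖D2 α x‖ ≤ 12 * ‖x‖ ^ (α-1) := by
  have hn : (0:ℝ) < ‖x‖ := norm_pos_iff.mpr hx
  have hp : (0:ℝ) ≤ ‖x‖^(α-1) := Real.rpow_nonneg (norm_nonneg x) _
  have hq : (0:ℝ) ≤ ‖x‖^(α-2) := Real.rpow_nonneg (norm_nonneg x) _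
  have h1 : ‖x‖ ^ (α-2) * ‖x‖ = ‖x‖ ^ (α-1) := by
    rw [show α-1 = (α-2)+1 by ring, Real.rpow_add_one (ne_of_gt hn)]
  have h3 : ‖x‖ ^ (α-3) * ‖x‖ = ‖x‖ ^ (α-2) := by
    rw [show α-2 = (α-3)+1 by ring, Real.rpow_add_one (ne_of_gt hn)]
  apply ContinuousLinearMap.opNorm_le_bound _ (by positivity)
  intro w
  have he : D2 α x w
      = ((α/2) * ‖x‖^(α-2) : ℝ) • (x * w + x * w) + ((α/2) * nDeriv (α-2) x w) • x^2 := by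
    simp [D2, ContinuousLinearMap.smul_apply, ContinuousLinearMap.add_apply,
      ContinuousLinearMap.smulRight_apply, smul_smul]
  rw [he]
  have hb1 : ‖((α/2) * ‖x‖^(α-2) : ℝ) • (x * w + x * w)‖ ≤ 4 * ‖x‖^(α-1) * ‖w‖ := by
    rw [norm_smul, Real.norm_eq_abs]
    rw [_root_.abs_of_nonneg (by positivity : (0:ℝ) ≤ α/2 * ‖x‖^(α-2))]
    have hxw : ‖x * w + x * w‖ ≤ 2 * (‖x‖ * ‖w‖) := by
      calc ‖x * w + x * w‖ ≤ ‖x*w‖ + ‖x*w‖ := norm_add_le _ _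
        _ = 2 * (‖x‖ * ‖w‖) := by rw [norm_mul]; ring
    calc α/2 * ‖x‖^(α-2) * ‖x*w + x*w‖ ≤ α/2 * ‖x‖^(α-2) * (2*(‖x‖*‖w‖)) :=
          mul_le_mul_of_nonneg_left hxw (by positivity)
      _ = α * (‖x‖^(α-2) * ‖x‖) * ‖w‖ := by ring
      _ = α * ‖x‖^(α-1) * ‖w‖ := by rw [h1]
      _ ≤ 4 * ‖x‖^(α-1) * ‖w‖ := by nlinarith [mul_nonneg hp (norm_nonneg w)]
  have hb2 : ‖((α/2) * nDeriv (α-2) x w) • x^2‖ ≤ 8 * ‖x‖^(α-1) * ‖w‖ := by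
    rw [norm_smul, Real.norm_eq_abs, abs_mul, norm_pow]
    have hnd := nDeriv_bound (α-2) hx w
    have habs2 : |α-2| ≤ 2 := abs_le.mpr ⟨by linarith, by linarith⟩
    have h32 : ‖x‖^(α-3) * (‖x‖ * ‖x‖) = ‖x‖^(α-1) := by
      rw [← mul_assoc, h3, h1]
    calc |α/2| * |nDeriv (α-2) x w| * ‖x‖^2
        ≤ |α/2| * (|α-2| * ‖x‖^(α-3) * ‖w‖) * ‖x‖^2 := by
          have h32' : ((α:ℝ)-2)-1 = α-3 := by ring
          rw [h32'] at hnd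
          refine mul_le_mul_of_nonneg_right (mul_le_mul_of_nonneg_left hnd (abs_nonneg _)) ?_
          positivity
      _ = |α/2| * |α-2| * (‖x‖^(α-3) * (‖x‖ * ‖x‖)) * ‖w‖ := by ring
      _ = |α/2| * |α-2| * ‖x‖^(α-1) * ‖w‖ := by rw [h32]
      _ ≤ 8 * ‖x‖^(α-1) * ‖w‖ := by
          have ha2 : |α/2| ≤ 2 := by rw [_root_.abs_of_nonneg (by linarith)]; linarith
          nlinarith [abs_nonneg (α/2), abs_nonneg (α-2), mul_nonneg hp (norm_nonneg w),
            mul_nonneg (abs_nonneg (α/2)) (mul_nonneg hp (norm_nonneg w))]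
  calc ‖((α/2) * ‖x‖^(α-2) : ℝ) • (x * w + x * w) + ((α/2) * nDeriv (α-2) x w) • x^2‖
      ≤ ‖((α/2) * ‖x‖^(α-2) : ℝ) • (x * w + x * w)‖ + ‖((α/2) * nDeriv (α-2) x w) • x^2‖ :=
        norm_add_le _ _
    _ ≤ 4 * ‖x‖^(α-1) * ‖w‖ + 8 * ‖x‖^(α-1) * ‖w‖ := add_le_add hb1 hb2
    _ = 12 * ‖x‖^(α-1) * ‖w‖ := by ring

lemma F1_bound (α : ℝ) (hα1 : 1 ≤ α) (hα4 : α ≤ 4) (x : ℂ) :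
    ‖(((1 + α/2) * ‖x‖ ^ α : ℝ) : ℂ)‖ ≤ 12 * ‖x‖ ^ α := by
  rw [Complex.norm_real, Real.norm_eq_abs, abs_mul,
    _root_.abs_of_nonneg (by linarith : (0:ℝ) ≤ 1+α/2),
    _root_.abs_of_nonneg (Real.rpow_nonneg (norm_nonneg x) α)]
  nlinarith [Real.rpow_nonneg (norm_nonneg x) α]

lemma F2_bound (α : ℝ) (hα1 : 1 ≤ α) (hα4 : α ≤ 4) (x : ℂ) :
    ‖(((α/2) * ‖x‖ ^ (α-2) : ℝ) : ℂ) * x^2‖ ≤ 12 * ‖x‖ ^ α := by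
  by_cases hx : x = 0
  · subst hx
    simp
    positivity
  have hn : (0:ℝ) < ‖x‖ := norm_pos_iff.mpr hx
  have hkey : ‖x‖ ^ (α-2) * (‖x‖ * ‖x‖) = ‖x‖ ^ α := by
    rw [show α = ((α-2)+1)+1 by ring, Real.rpow_add_one (ne_of_gt hn),
      Real.rpow_add_one (ne_of_gt hn)]
    ring
  rw [norm_mul, Complex.norm_real, Real.norm_eq_abs, abs_mul, norm_pow,
    _root_.abs_of_nonneg (by linarith : (0:ℝ) ≤ α/2),
    _root_.abs_of_nonneg (Real.rpow_nonneg (norm_nonneg x) (α-2))]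
  calc α/2 * ‖x‖^(α-2) * ‖x‖^2 = α/2 * (‖x‖^(α-2) * (‖x‖*‖x‖)) := by ring
    _ = α/2 * ‖x‖^α := by rw [hkey]
    _ ≤ 12 * ‖x‖^α := by nlinarith [Real.rpow_nonneg (norm_nonneg x) α]

lemma boundZ (α : ℝ) (hα1 : 1 ≤ α) (hα4 : α ≤ 4) (u v : ℂ) :
    ‖wirtingerZ (fun z => ((‖z‖ ^ α : ℝ) : ℂ) * z) u
        - wirtingerZ (fun z => ((‖z‖ ^ α : ℝ) : ℂ) * z) v‖
      ≤ 24 * ‖u-v‖ * (‖u‖^(α-1) + ‖v‖^(α-1)) := by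
  have h0 : (0:ℝ) < α := by linarith
  rw [wirtingerZ_formula α h0 u, wirtingerZ_formula α h0 v]
  have h := key_lip' α 12 hα1 (by norm_num)
    (fun x : ℂ => (((1 + α/2) * ‖x‖ ^ α : ℝ) : ℂ)) (D1 α)
    (fun x hx => hasFDerivAt_F1 α hx) (fun x hx => D1_bound α hα1 hα4 hx)
    (fun x => F1_bound α hα1 hα4 x) u v
  calc _ ≤ 2*12 * ‖u-v‖ * (‖u‖^(α-1) + ‖v‖^(α-1)) := h
    _ = 24 * ‖u-v‖ * (‖u‖^(α-1) + ‖v‖^(α-1)) := by ring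

lemma boundZbar (α : ℝ) (hα1 : 1 ≤ α) (hα4 : α ≤ 4) (u v : ℂ) :
    ‖wirtingerZbar (fun z => ((‖z‖ ^ α : ℝ) : ℂ) * z) u
        - wirtingerZbar (fun z => ((‖z‖ ^ α : ℝ) : ℂ) * z) v‖
      ≤ 24 * ‖u-v‖ * (‖u‖^(α-1) + ‖v‖^(α-1)) := by
  have h0 : (0:ℝ) < α := by linarith
  rw [wirtingerZbar_formula α h0 u, wirtingerZbar_formula α h0 v]
  have h := key_lip' α 12 hα1 (by norm_num)
    (fun x : ℂ => (((α/2) * ‖x‖ ^ (α-2) : ℝ) : ℂ) * x^2) (D2 α)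
    (fun x hx => hasFDerivAt_F2 α hx) (fun x hx => D2_bound α hα1 hα4 hx)
    (fun x => F2_bound α hα1 hα4 x) u v
  calc _ ≤ 2*12 * ‖u-v‖ * (‖u‖^(α-1) + ‖v‖^(α-1)) := h
    _ = 24 * ‖u-v‖ * (‖u‖^(α-1) + ‖v‖^(α-1)) := by ring

/-- For `f(z) = |z|^{4/(N−2)} z` with `3 ≤ N ≤ 6`, the Wirtinger derivatives satisfy
`|∂_z f(u) − ∂_z f(v)| ≤ C|u−v|(|u|^{(6−N)/(N−2)} + |v|^{(6−N)/(N−2)})`, and similarly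
for `∂_z̄ f`. -/
theorem stmt13 (N : ℕ) (hN3 : 3 ≤ N) (hN6 : N ≤ 6) :
    ∃ C > (0 : ℝ), ∀ u v : ℂ,
      ‖wirtingerZ (fun z => ((‖z‖ ^ ((4 : ℝ) / ((N : ℝ) - 2)) : ℝ) : ℂ) * z) u
          - wirtingerZ (fun z => ((‖z‖ ^ ((4 : ℝ) / ((N : ℝ) - 2)) : ℝ) : ℂ) * z) v‖
        ≤ C * ‖u - v‖ * (‖u‖ ^ (((6 : ℝ) - N) / ((N : ℝ) - 2))
            + ‖v‖ ^ (((6 : ℝ) - N) / ((N : ℝ) - 2)))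
      ∧ ‖wirtingerZbar (fun z => ((‖z‖ ^ ((4 : ℝ) / ((N : ℝ) - 2)) : ℝ) : ℂ) * z) u
          - wirtingerZbar (fun z => ((‖z‖ ^ ((4 : ℝ) / ((N : ℝ) - 2)) : ℝ) : ℂ) * z) v‖
        ≤ C * ‖u - v‖ * (‖u‖ ^ (((6 : ℝ) - N) / ((N : ℝ) - 2))
            + ‖v‖ ^ (((6 : ℝ) - N) / ((N : ℝ) - 2))) := by
  have hN3' : (3:ℝ) ≤ (N:ℝ) := by exact_mod_cast hN3
  have hN6' : (N:ℝ) ≤ 6 := by exact_mod_cast hN6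
  have hd : (0:ℝ) < (N:ℝ) - 2 := by linarith
  have hα1 : 1 ≤ (4:ℝ) / ((N:ℝ) - 2) := by
    rw [le_div_iff₀ hd]; linarith
  have hα4 : (4:ℝ) / ((N:ℝ) - 2) ≤ 4 := by
    rw [div_le_iff₀ hd]; linarith
  have hexp : ((6:ℝ) - N) / ((N:ℝ) - 2) = (4:ℝ) / ((N:ℝ) - 2) - 1 := by
    field_simp
    ring
  refine ⟨24, by norm_num, fun u v => ?_⟩
  rw [hexp]
  exact ⟨boundZ ((4:ℝ) / ((N:ℝ) - 2)) hα1 hα4 u v,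
    boundZbar ((4:ℝ) / ((N:ℝ) - 2)) hα1 hα4 u v⟩
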